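/- Let c_1, ..., c_n be real numbers (energy consumptions, possibly negative), β_0 ≥ 0 the initial state of charge, B > 0 the battery capacity, and α ∈ [0,1). Suppose (1/2)·Σ_{i=1}^n (|c_i| − c_i) ≤ (α/(2(1−α)))·Σ_{i=1}^n c_i and β_0 − Σ_{i=1}^n c_i ≥ α·B and β_0 ≤ B. Then for all indices 1 ≤ j ≤ k ≤ n, β_0 − Σ_{i=j}^k c_i ≥ 0. -/

import Mathlib

theorem soc_feasibility
    (n : ℕ) (c : ℕ → ℝ) (β₀ B α : ℝ)
    (hβ₀ : 0 ≤ β₀) (hB : 0 < B) (hα0 : 0 ≤ α) (hα1 : α < 1)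
    (hharvest : (1 / 2) * ∑ i ∈ Finset.Icc 1 n, (|c i| - c i)
        ≤ (α / (2 * (1 - α))) * ∑ i ∈ Finset.Icc 1 n, c i)
    (hfinal : β₀ - ∑ i ∈ Finset.Icc 1 n, c i ≥ α * B)
    (hcap : β₀ ≤ B) :
    ∀ j k : ℕ, 1 ≤ j → j ≤ k → k ≤ n →
      0 ≤ β₀ - ∑ i ∈ Finset.Icc j k, c i := by
  intro j k hj hjk hk
  set S := ∑ i ∈ Finset.Icc 1 n, c i with hS
  have hsub : Finset.Icc j k ⊆ Finset.Icc 1 n := Finset.Icc_subset_Icc hj hk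
  have h1 : ∑ i ∈ Finset.Icc j k, c i ≤ ∑ i ∈ Finset.Icc j k, (|c i| + c i) / 2 := by
    apply Finset.sum_le_sum
    intro i _
    have := le_abs_self (c i)
    linarith
  have h2 : ∑ i ∈ Finset.Icc j k, (|c i| + c i) / 2
      ≤ ∑ i ∈ Finset.Icc 1 n, (|c i| + c i) / 2 := by
    apply Finset.sum_le_sum_of_subset_of_nonneg hsub
    intro i _ _
    have := neg_abs_le (c i)
    linarith
  have h3 : ∑ i ∈ Finset.Icc 1 n, (|c i| + c i) / 2
      = S + (1 / 2) * ∑ i ∈ Finset.Icc 1 n, (|c i| - c i) := by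
    rw [Finset.mul_sum, ← Finset.sum_add_distrib]
    apply Finset.sum_congr rfl
    intro i _
    ring
  -- bound H ≤ α B / 2
  have hSle : S ≤ (1 - α) * B := by nlinarith
  have hcoef : 0 ≤ α / (2 * (1 - α)) := by
    apply div_nonneg hα0
    nlinarith
  have hH : (α / (2 * (1 - α))) * S ≤ (α / (2 * (1 - α))) * ((1 - α) * B) :=
    mul_le_mul_of_nonneg_left hSle hcoef
  have hval : (α / (2 * (1 - α))) * ((1 - α) * B) = α * B / 2 := by
    have hne : (1 : ℝ) - α ≠ 0 := by linarith
    field_simp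
  have hH2 : (1 / 2) * ∑ i ∈ Finset.Icc 1 n, (|c i| - c i) ≤ α * B / 2 := by
    calc _ ≤ (α / (2 * (1 - α))) * S := hharvest
    _ ≤ α * B / 2 := by rw [← hval]; exact hH
  nlinarith [mul_nonneg hα0 hB.le]
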